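/- For all integers d ≥ 3 and n ≥ 4 with d odd, the domination number of the directed 3-constrained de Bruijn graph satisfies d · (d−2)^{n−2} ≤ γ(cDB⁺(d,3,n)) ≤ (d−1)² · (d−2)^{n−3}. -/

import Mathlib

/-- A sequence `x` of length `n` over the alphabet `Fin d` is `t`-constrained if
equal symbols occur at positions at distance at least `t`. -/
def dbConstrained (d t n : ℕ) (x : Fin n → Fin d) : Prop :=
  ∀ i j : Fin n, i < j → x i = x j → t ≤ (j : ℕ) - (i : ℕ)

/-- The vertex set `V(d,t,n)` of the `t`-constrained de Bruijn graph: all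
`t`-constrained sequences of length `n` over a `d`-letter alphabet. -/
abbrev dbVtx (d t n : ℕ) : Type := {x : Fin n → Fin d // dbConstrained d t n x}

/-- `dbShift x y` holds when there is a directed de Bruijn edge from `x` to `y`,
i.e. `y` is obtained from `x` by deleting its first symbol and appending a new
last symbol. -/
def dbShift {d t n : ℕ} (x y : dbVtx d t n) : Prop :=
  ∀ (i : Fin n) (h : (i : ℕ) + 1 < n), y.val i = x.val ⟨(i : ℕ) + 1, h⟩

/-- `S` is a dominating set of the directed `t`-constrained de Bruijn graph
`cDB⁺(d,t,n)`: every vertex is dominated by (equal to, or an out-neighbor of)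
some element of `S`. -/
def dbDirDominating {d t n : ℕ} (S : Set (dbVtx d t n)) : Prop :=
  ∀ v : dbVtx d t n, ∃ s ∈ S, s = v ∨ dbShift s v

/-- The domination number `γ(cDB⁺(d,t,n))` of the directed `t`-constrained
de Bruijn graph. -/
noncomputable def gammaDir (d t n : ℕ) : ℕ :=
  sInf {k | ∃ S : Set (dbVtx d t n), S.Finite ∧ S.ncard = k ∧ dbDirDominating S}

/-- Adjacency in the undirected `t`-constrained de Bruijn graph `cDB(d,t,n)`:
edge directions are ignored and loops are removed. -/
def dbAdj {d t n : ℕ} (x y : dbVtx d t n) : Prop :=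
  x ≠ y ∧ (dbShift x y ∨ dbShift y x)

/-- `S` is a dominating set of the undirected graph `cDB(d,t,n)`: every vertex
is dominated by (equal to, or adjacent to) some element of `S`. -/
def dbUndirDominating {d t n : ℕ} (S : Set (dbVtx d t n)) : Prop :=
  ∀ v : dbVtx d t n, ∃ s ∈ S, s = v ∨ dbAdj s v

/-- The domination number `γ(cDB(d,t,n))` of the undirected `t`-constrained
de Bruijn graph. -/
noncomputable def gammaUndir (d t n : ℕ) : ℕ :=
  sInf {k | ∃ S : Set (dbVtx d t n), S.Finite ∧ S.ncard = k ∧ dbUndirDominating S}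


set_option maxHeartbeats 1000000

namespace DBaux
open Finset

variable {d : ℕ}

/-! ### pick/rank gadgets -/

lemma card_compl_one (a : Fin d) : (({a} : Finset (Fin d))ᶜ).card = d - 1 := by
  rw [Finset.card_compl, Finset.card_singleton, Fintype.card_fin]

lemma card_compl_pair {a b : Fin d} (h : a ≠ b) :
    (({a, b} : Finset (Fin d))ᶜ).card = d - 2 := by
  rw [Finset.card_compl, Finset.card_pair h, Fintype.card_fin]

noncomputable def pick1 (a : Fin d) (c : Fin (d - 1)) : Fin d :=
  ((({a} : Finset (Fin d))ᶜ.equivFinOfCardEq (card_compl_one a)).symm c : Fin d)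

lemma pick1_ne (a : Fin d) (c : Fin (d - 1)) : pick1 a c ≠ a := by
  have h := ((({a} : Finset (Fin d))ᶜ.equivFinOfCardEq (card_compl_one a)).symm c).2
  rw [Finset.mem_compl, Finset.mem_singleton] at h
  exact h

lemma pick1_injective (a : Fin d) : Function.Injective (pick1 a) := by
  intro c c' h
  have := Subtype.ext (p := fun x => x ∈ ({a} : Finset (Fin d))ᶜ) h
  exact (Equiv.symm (Finset.equivFinOfCardEq (card_compl_one a))).injective this

noncomputable def rank1 (a x : Fin d) (hx : x ≠ a) : Fin (d - 1) :=
  (({a} : Finset (Fin d))ᶜ.equivFinOfCardEq (card_compl_one a)) ⟨x, by simpa using hx⟩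

lemma pick1_rank1 (a x : Fin d) (hx : x ≠ a) : pick1 a (rank1 a x hx) = x := by
  simp [pick1, rank1]

noncomputable def pick2 (a b : Fin d) (c : Fin (d - 2)) : Fin d :=
  if h : (({a, b} : Finset (Fin d))ᶜ).card = d - 2 then
    ((({a, b} : Finset (Fin d))ᶜ.equivFinOfCardEq h).symm c : Fin d)
  else a

lemma pick2_mem {a b : Fin d} (hab : a ≠ b) (c : Fin (d - 2)) :
    pick2 a b c ∈ (({a, b} : Finset (Fin d))ᶜ) := by
  rw [pick2, dif_pos (card_compl_pair hab)]
  exact ((({a, b} : Finset (Fin d))ᶜ.equivFinOfCardEq (card_compl_pair hab)).symm c).2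

lemma pick2_ne_left {a b : Fin d} (hab : a ≠ b) (c : Fin (d - 2)) : pick2 a b c ≠ a := by
  have := pick2_mem hab c; simp at this; exact this.1

lemma pick2_ne_right {a b : Fin d} (hab : a ≠ b) (c : Fin (d - 2)) : pick2 a b c ≠ b := by
  have := pick2_mem hab c; simp at this; exact this.2

lemma pick2_injective {a b : Fin d} (hab : a ≠ b) : Function.Injective (pick2 a b) := by
  intro c c' h
  rw [pick2, dif_pos (card_compl_pair hab), pick2, dif_pos (card_compl_pair hab)] at h
  have := Subtype.ext (p := fun x => x ∈ ({a, b} : Finset (Fin d))ᶜ) h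
  exact (Equiv.symm (Finset.equivFinOfCardEq (card_compl_pair hab))).injective this

noncomputable def rank2 (a b x : Fin d) (hab : a ≠ b) (h1 : x ≠ a) (h2 : x ≠ b) : Fin (d - 2) :=
  (({a, b} : Finset (Fin d))ᶜ.equivFinOfCardEq (card_compl_pair hab)) ⟨x, by simp [h1, h2]⟩

lemma pick2_rank2 (a b x : Fin d) (hab : a ≠ b) (h1 : x ≠ a) (h2 : x ≠ b) :
    pick2 a b (rank2 a b x hab h1 h2) = x := by
  rw [pick2, dif_pos (card_compl_pair hab), rank2]
  simp

/-! ### the involution -/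

def gsw (d : ℕ) (b : Fin d) : Fin d :=
  if h : b.1 < d - 1 then
    (if b.1 % 2 = 0 then ⟨b.1 + 1, by omega⟩ else ⟨b.1 - 1, by omega⟩)
  else b

lemma gsw_ne {b : Fin d} (hb : b.1 < d - 1) : gsw d b ≠ b := by
  rw [gsw, dif_pos hb]
  split <;> (intro h; have := congrArg Fin.val h; simp only [Fin.val_mk] at this; omega)

lemma gsw_invol (hodd : d % 2 = 1) {b : Fin d} (hb : b.1 < d - 1) : gsw d (gsw d b) = b := by
  rcases Nat.even_or_odd b.1 with he | ho
  · have he' : b.1 % 2 = 0 := Nat.even_iff.mp he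
    have h1 : gsw d b = ⟨b.1 + 1, by omega⟩ := by rw [gsw, dif_pos hb, if_pos he']
    rw [h1, gsw]
    have hb1 : (⟨b.1 + 1, by omega⟩ : Fin d).1 < d - 1 := by simp only [Fin.val_mk]; omega
    rw [dif_pos hb1, if_neg (by simp only [Fin.val_mk]; omega)]
    exact Fin.ext (by simp only [Fin.val_mk]; omega)
  · have ho' : b.1 % 2 = 1 := Nat.odd_iff.mp ho
    have h1 : gsw d b = ⟨b.1 - 1, by omega⟩ := by rw [gsw, dif_pos hb, if_neg (by omega)]
    rw [h1, gsw]
    rw [dif_pos (by simp only [Fin.val_mk]; omega), if_pos (by simp only [Fin.val_mk]; omega)]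
    exact Fin.ext (by simp only [Fin.val_mk]; omega)

/-! ### decoding choice sequences into constrained sequences -/

noncomputable def decodeP (ab : Fin d × Fin d) (c : ℕ → Fin (d - 2)) : ℕ → Fin d × Fin d
  | 0 => ab
  | k + 1 => ((decodeP ab c k).2, pick2 (decodeP ab c k).1 (decodeP ab c k).2 (c k))

noncomputable def decode (ab : Fin d × Fin d) (c : ℕ → Fin (d - 2)) (k : ℕ) : Fin d :=
  (decodeP ab c k).1

lemma decode_zero (ab : Fin d × Fin d) (c : ℕ → Fin (d - 2)) : decode ab c 0 = ab.1 := rfl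
lemma decode_one (ab : Fin d × Fin d) (c : ℕ → Fin (d - 2)) : decode ab c 1 = ab.2 := rfl
lemma decode_step (ab : Fin d × Fin d) (c : ℕ → Fin (d - 2)) (k : ℕ) :
    decode ab c (k + 2) = pick2 (decode ab c k) (decode ab c (k + 1)) (c k) := rfl

lemma decode_ne_succ (ab : Fin d × Fin d) (hab : ab.1 ≠ ab.2) (c : ℕ → Fin (d - 2)) :
    ∀ k, decode ab c k ≠ decode ab c (k + 1) := by
  intro k
  induction k with
  | zero => exact hab
  | succ k ih =>
    rw [decode_step]
    exact (pick2_ne_right ih (c k)).symm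

lemma decode_ne_two (ab : Fin d × Fin d) (hab : ab.1 ≠ ab.2) (c : ℕ → Fin (d - 2)) (k : ℕ) :
    decode ab c k ≠ decode ab c (k + 2) := by
  rw [decode_step]
  exact (pick2_ne_left (decode_ne_succ ab hab c k) (c k)).symm

lemma decode_eq_of (ab : Fin d × Fin d) (c : ℕ → Fin (d - 2)) (x : ℕ → Fin d) (m : ℕ)
    (h0 : ab.1 = x 0) (h1 : ab.2 = x 1)
    (hc : ∀ k, k + 2 < m → pick2 (x k) (x (k + 1)) (c k) = x (k + 2)) :
    ∀ k, k < m → decode ab c k = x k := by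
  intro k
  induction k using Nat.strong_induction_on with
  | _ k ih =>
    match k, ih with
    | 0, _ => intro _; exact h0
    | 1, _ => intro _; exact h1
    | (k + 2), ih =>
      intro hk
      rw [decode_step, ih k (by omega) (by omega), ih (k + 1) (by omega) (by omega)]
      exact hc k hk

end DBaux
namespace DBaux
open Finset
variable {d n : ℕ}

instance (d t n : ℕ) : DecidablePred (dbConstrained d t n) := fun x => by
  unfold dbConstrained; infer_instance

instance (d t n : ℕ) (x y : dbVtx d t n) : Decidable (dbShift x y) := by
  unfold dbShift; infer_instance

instance (d t n : ℕ) : Fintype (dbVtx d t n) := Subtype.fintype _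

lemma vtx_ne1 (v : dbVtx d 3 n) (k : ℕ) (h : k + 1 < n) :
    v.val ⟨k, by omega⟩ ≠ v.val ⟨k + 1, h⟩ := by
  intro he
  have := v.2 ⟨k, by omega⟩ ⟨k + 1, h⟩ (by simp [Fin.lt_def]) he
  simp only [Fin.val_mk] at this
  omega

lemma vtx_ne2 (v : dbVtx d 3 n) (k : ℕ) (h : k + 2 < n) :
    v.val ⟨k, by omega⟩ ≠ v.val ⟨k + 2, h⟩ := by
  intro he
  have := v.2 ⟨k, by omega⟩ ⟨k + 2, h⟩ (by simp [Fin.lt_def]) he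
  simp only [Fin.val_mk] at this
  omega

lemma constrained_of (x : Fin n → Fin d)
    (h1 : ∀ k (h : k + 1 < n), x ⟨k, by omega⟩ ≠ x ⟨k + 1, h⟩)
    (h2 : ∀ k (h : k + 2 < n), x ⟨k, by omega⟩ ≠ x ⟨k + 2, h⟩) :
    dbConstrained d 3 n x := by
  intro i j hij heq
  by_contra hlt
  push_neg at hlt
  have hij' : i.1 < j.1 := hij
  have hi : i = ⟨i.1, i.2⟩ := Fin.ext rfl
  rcases (by omega : j.1 = i.1 + 1 ∨ j.1 = i.1 + 2) with hj | hj
  · exact h1 i.1 (by omega)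
      ((congrArg x hi).symm.trans
        (heq.trans (congrArg x (Fin.ext (by simp [hj]) : j = ⟨i.1 + 1, by omega⟩))))
  · exact h2 i.1 (by omega)
      ((congrArg x hi).symm.trans
        (heq.trans (congrArg x (Fin.ext (by simp [hj]) : j = ⟨i.1 + 2, by omega⟩))))

lemma shift_val {s v : dbVtx d 3 n} (hsv : dbShift s v) (k : ℕ) (h : k + 1 < n) :
    v.val ⟨k, by omega⟩ = s.val ⟨k + 1, h⟩ := hsv ⟨k, by omega⟩ h

end DBaux
namespace DBaux
open Finset
variable {d n : ℕ}

/-- extend a function on `Fin m` to `ℕ` (junk value from position `0`). -/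
def extc {α : Type*} {m : ℕ} (hm : 0 < m) (c : Fin m → α) (k : ℕ) : α :=
  if h : k < m then c ⟨k, h⟩ else c ⟨0, hm⟩

lemma extc_lt {α : Type*} {m : ℕ} (hm : 0 < m) (c : Fin m → α) {k : ℕ} (h : k < m) :
    extc hm c k = c ⟨k, h⟩ := dif_pos h

/-- the injection giving the cardinality lower bound for the vertex set. -/
noncomputable def FF (d n : ℕ) (hn : 4 ≤ n) (u : Fin d × Fin (d - 1) × (Fin (n - 2) → Fin (d - 2))) :
    dbVtx d 3 n :=
  ⟨fun i => decode (u.1, pick1 u.1 u.2.1) (extc (by omega) u.2.2) i.1, by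
    have hab : (u.1, pick1 u.1 u.2.1).1 ≠ (u.1, pick1 u.1 u.2.1).2 := (pick1_ne u.1 u.2.1).symm
    apply constrained_of
    · intro k h
      exact decode_ne_succ _ hab _ k
    · intro k h
      exact decode_ne_two _ hab _ k⟩

lemma FF_injective (d n : ℕ) (hd : 3 ≤ d) (hn : 4 ≤ n) : Function.Injective (FF d n hn) := by
  intro u u' h
  obtain ⟨a, b, c⟩ := u
  obtain ⟨a', b', c'⟩ := u'
  have hD : ∀ k (hk : k < n),
      decode (a, pick1 a b) (extc (by omega) c) k
        = decode (a', pick1 a' b') (extc (by omega) c') k := by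
    intro k hk
    exact congrFun (congrArg Subtype.val h) ⟨k, hk⟩
  have ha : a = a' := hD 0 (by omega)
  subst ha
  have hb : b = b' := by
    have := hD 1 (by omega)
    rw [decode_one, decode_one] at this
    exact pick1_injective a this
  subst hb
  have hc : c = c' := by
    funext k
    have h0 := hD k.1 (by omega)
    have h1 := hD (k.1 + 1) (by omega)
    have h2 := hD (k.1 + 2) (by omega)
    rw [decode_step, decode_step, h0, h1] at h2
    have hne : decode (a, pick1 a b) (extc (by omega : (0:ℕ) < n - 2) c') k.1
        ≠ decode (a, pick1 a b) (extc (by omega : (0:ℕ) < n - 2) c') (k.1 + 1) := by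
      exact decode_ne_succ _ (pick1_ne a b).symm _ k.1
    have h3 := pick2_injective hne h2
    rw [extc_lt _ c (by omega : k.1 < n - 2), extc_lt _ c' (by omega : k.1 < n - 2)] at h3
    simpa using h3
  subst hc
  rfl

end DBaux
namespace DBaux
open Finset
variable {d n : ℕ}

lemma card_vtx_ge (d n : ℕ) (hd : 3 ≤ d) (hn : 4 ≤ n) :
    d * (d - 1) * (d - 2) ^ (n - 2) ≤ Fintype.card (dbVtx d 3 n) := by
  have h := Fintype.card_le_of_injective _ (FF_injective d n hd hn)
  calc d * (d - 1) * (d - 2) ^ (n - 2)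
      = Fintype.card (Fin d × Fin (d - 1) × (Fin (n - 2) → Fin (d - 2))) := by
        simp [Fintype.card_fun, mul_assoc]
    _ ≤ _ := h

lemma shift_card (d n : ℕ) (hd : 3 ≤ d) (hn : 4 ≤ n) (s : dbVtx d 3 n) :
    (Finset.univ.filter (fun v : dbVtx d 3 n => dbShift s v)).card ≤ d - 2 := by
  have hne : s.val ⟨n - 2, by omega⟩ ≠ s.val ⟨n - 1, by omega⟩ := by
    have := vtx_ne1 s (n - 2) (by omega)
    exact fun q => this (q.trans (congrArg s.val (Fin.ext (by simp only [Fin.val_mk]; omega))))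
  have hcard : (({s.val ⟨n - 1, by omega⟩, s.val ⟨n - 2, by omega⟩} : Finset (Fin d))ᶜ).card
      = d - 2 := card_compl_pair hne.symm
  rw [← hcard]
  apply Finset.card_le_card_of_injOn (fun v => v.val ⟨n - 1, by omega⟩)
  · intro v hv
    rw [Finset.mem_coe, Finset.mem_filter] at hv
    have h1 : v.val ⟨n - 2, by omega⟩ = s.val ⟨n - 1, by omega⟩ :=
      (shift_val hv.2 (n - 2) (by omega)).trans
        (congrArg s.val (Fin.ext (by simp only [Fin.val_mk]; omega)))
    have h2 : v.val ⟨n - 3, by omega⟩ = s.val ⟨n - 2, by omega⟩ :=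
      (shift_val hv.2 (n - 3) (by omega)).trans
        (congrArg s.val (Fin.ext (by simp only [Fin.val_mk]; omega)))
    have hv1 : v.val ⟨n - 1, by omega⟩ ≠ v.val ⟨n - 2, by omega⟩ := by
      have e1 : v.val ⟨n - 2 + 1, by omega⟩ = v.val ⟨n - 1, by omega⟩ :=
        congrArg v.val (Fin.ext (by simp only [Fin.val_mk]; omega))
      exact fun q => vtx_ne1 v (n - 2) (by omega) (e1.trans q).symm
    have hv2 : v.val ⟨n - 1, by omega⟩ ≠ v.val ⟨n - 3, by omega⟩ := by
      have e3 : v.val ⟨n - 3 + 2, by omega⟩ = v.val ⟨n - 1, by omega⟩ :=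
        congrArg v.val (Fin.ext (by simp only [Fin.val_mk]; omega))
      exact fun q => vtx_ne2 v (n - 3) (by omega) (e3.trans q).symm
    simp only [Finset.mem_coe, Finset.mem_compl, Finset.mem_insert, Finset.mem_singleton]
    push_neg
    exact ⟨fun he => hv1 (he.trans h1.symm), fun he => hv2 (he.trans h2.symm)⟩
  · intro v hv w hw hvw
    rw [Finset.mem_coe, Finset.mem_filter] at hv hw
    apply Subtype.ext
    funext i
    rcases (by omega : i.1 + 1 < n ∨ i.1 = n - 1) with h | h
    · rw [hv.2 i h, hw.2 i h]
    · have hi : i = ⟨n - 1, by omega⟩ := Fin.ext (by simp only [Fin.val_mk]; omega)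
      rw [hi]
      exact hvw

lemma dom_bound (d n : ℕ) (hd : 3 ≤ d) (hn : 4 ≤ n) (s : dbVtx d 3 n) :
    (Finset.univ.filter (fun v : dbVtx d 3 n => s = v ∨ dbShift s v)).card ≤ d - 1 := by
  have hsub : (Finset.univ.filter (fun v : dbVtx d 3 n => s = v ∨ dbShift s v))
      ⊆ insert s (Finset.univ.filter (fun v : dbVtx d 3 n => dbShift s v)) := by
    intro v hv
    rw [Finset.mem_filter] at hv
    rcases hv.2 with h | h
    · exact Finset.mem_insert.mpr (Or.inl h.symm)
    · exact Finset.mem_insert.mpr (Or.inr (Finset.mem_filter.mpr ⟨Finset.mem_univ _, h⟩))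
  have hshift := shift_card d n hd hn s
  calc (Finset.univ.filter (fun v : dbVtx d 3 n => s = v ∨ dbShift s v)).card
      ≤ (insert s (Finset.univ.filter (fun v : dbVtx d 3 n => dbShift s v))).card :=
        Finset.card_le_card hsub
    _ ≤ (Finset.univ.filter (fun v : dbVtx d 3 n => dbShift s v)).card + 1 :=
        Finset.card_insert_le _ _
    _ ≤ (d - 2) + 1 := by omega
    _ = d - 1 := by omega

lemma lower_aux (d n : ℕ) (hd : 3 ≤ d) (hn : 4 ≤ n) {S : Set (dbVtx d 3 n)} (hfin : S.Finite)
    (hdom : dbDirDominating S) : d * (d - 2) ^ (n - 2) ≤ S.ncard := by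
  classical
  set F := hfin.toFinset with hF
  have hcov : (Finset.univ : Finset (dbVtx d 3 n))
      ⊆ F.biUnion (fun s => Finset.univ.filter (fun v => s = v ∨ dbShift s v)) := by
    intro v _
    obtain ⟨s, hs, hsv⟩ := hdom v
    exact Finset.mem_biUnion.mpr ⟨s, hfin.mem_toFinset.mpr hs,
      Finset.mem_filter.mpr ⟨Finset.mem_univ _, hsv⟩⟩
  have h1 : Fintype.card (dbVtx d 3 n) ≤ F.card * (d - 1) := by
    calc Fintype.card (dbVtx d 3 n)
        = (Finset.univ : Finset (dbVtx d 3 n)).card := (Finset.card_univ).symm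
      _ ≤ (F.biUnion (fun s => Finset.univ.filter (fun v => s = v ∨ dbShift s v))).card :=
          Finset.card_le_card hcov
      _ ≤ ∑ s ∈ F, (Finset.univ.filter (fun v => s = v ∨ dbShift s v)).card :=
          Finset.card_biUnion_le
      _ ≤ ∑ _s ∈ F, (d - 1) := Finset.sum_le_sum (fun s _ => dom_bound d n hd hn s)
      _ = F.card * (d - 1) := by rw [Finset.sum_const, smul_eq_mul]
  have h2 := card_vtx_ge d n hd hn
  have h3 : d * (d - 2) ^ (n - 2) * (d - 1) ≤ F.card * (d - 1) := by
    calc d * (d - 2) ^ (n - 2) * (d - 1) = d * (d - 1) * (d - 2) ^ (n - 2) := by ring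
      _ ≤ Fintype.card (dbVtx d 3 n) := h2
      _ ≤ F.card * (d - 1) := h1
  have h4 : d * (d - 2) ^ (n - 2) ≤ F.card := by
    have h3' : (d - 1) * (d * (d - 2) ^ (n - 2)) ≤ (d - 1) * F.card := by
      calc (d - 1) * (d * (d - 2) ^ (n - 2)) = d * (d - 2) ^ (n - 2) * (d - 1) := by ring
        _ ≤ F.card * (d - 1) := h3
        _ = (d - 1) * F.card := by ring
    exact Nat.le_of_mul_le_mul_left h3' (by omega)
  rw [Set.ncard_eq_toFinset_card S hfin]
  exact h4

end DBaux
namespace DBaux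
open Finset
variable {d n : ℕ}

def consSeq (h0 : Fin d) (p : ℕ → Fin d) : ℕ → Fin d
  | 0 => h0
  | k + 1 => p k

noncomputable def hsel (hd : 3 ≤ d) (a b : Fin d) : Fin d :=
  if h : a.1 < d - 1 ∧ gsw d a ≠ b then gsw d a else pick2 a b ⟨0, by omega⟩

lemma hsel_ne_left (hd : 3 ≤ d) {a b : Fin d} (hab : a ≠ b) : hsel hd a b ≠ a := by
  rw [hsel]
  by_cases h : a.1 < d - 1 ∧ gsw d a ≠ b
  · rw [dif_pos h]; exact gsw_ne h.1
  · rw [dif_neg h]; exact pick2_ne_left hab _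

lemma hsel_ne_right (hd : 3 ≤ d) {a b : Fin d} (hab : a ≠ b) : hsel hd a b ≠ b := by
  rw [hsel]
  by_cases h : a.1 < d - 1 ∧ gsw d a ≠ b
  · rw [dif_pos h]; exact h.2
  · rw [dif_neg h]; exact pick2_ne_right hab _

lemma hsel_spec (hd : 3 ≤ d) {a b : Fin d} (h1 : a.1 < d - 1) (h2 : gsw d a ≠ b) :
    hsel hd a b = gsw d a := dif_pos ⟨h1, h2⟩

noncomputable def pairAB (d : ℕ) (hd : 3 ≤ d) :
    (Fin (d - 1) × Fin (d - 2)) ⊕ Fin (d - 1) → Fin d × Fin d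
  | Sum.inl bc =>
      (pick2 ⟨bc.1.1, by have := bc.1.isLt; omega⟩
        (gsw d ⟨bc.1.1, by have := bc.1.isLt; omega⟩) bc.2, ⟨bc.1.1, by have := bc.1.isLt; omega⟩)
  | Sum.inr c0 => (pick1 ⟨d - 1, by omega⟩ c0, ⟨d - 1, by omega⟩)

lemma pairAB_ne (hd : 3 ≤ d) (pr : (Fin (d - 1) × Fin (d - 2)) ⊕ Fin (d - 1)) :
    (pairAB d hd pr).1 ≠ (pairAB d hd pr).2 := by
  cases pr with
  | inl bc =>
    have hb : (⟨bc.1.1, by have := bc.1.isLt; omega⟩ : Fin d).1 < d - 1 := bc.1.isLt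
    exact pick2_ne_left ((gsw_ne hb).symm) bc.2
  | inr c0 => exact pick1_ne _ _

noncomputable def fS (d n : ℕ) (hd : 3 ≤ d) (hn : 4 ≤ n)
    (u : ((Fin (d - 1) × Fin (d - 2)) ⊕ Fin (d - 1)) × (Fin (n - 3) → Fin (d - 2))) :
    dbVtx d 3 n :=
  ⟨fun i => consSeq (hsel hd (pairAB d hd u.1).1 (pairAB d hd u.1).2)
      (decode (pairAB d hd u.1) (extc (show 0 < n - 3 by omega) u.2)) i.1, by
    have hab := pairAB_ne hd u.1
    apply constrained_of
    · intro k h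
      cases k with
      | zero => exact hsel_ne_left hd hab
      | succ k => exact decode_ne_succ _ hab _ k
    · intro k h
      cases k with
      | zero => exact hsel_ne_right hd hab
      | succ k => exact decode_ne_two _ hab _ k⟩

lemma fS_dominating (d n : ℕ) (hd : 3 ≤ d) (hn : 4 ≤ n) (hodd : d % 2 = 1) :
    dbDirDominating (Set.range (fS d n hd hn)) := by
  intro v
  set xe : ℕ → Fin d := fun k => if h : k < n then v.val ⟨k, h⟩ else v.val ⟨0, by omega⟩ with hxe
  have xe_eq : ∀ k (h : k < n), xe k = v.val ⟨k, h⟩ := fun k h => dif_pos h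
  have xe1 : ∀ k, k + 1 < n → xe k ≠ xe (k + 1) := by
    intro k h
    rw [xe_eq k (by omega), xe_eq (k + 1) h]
    exact vtx_ne1 v k h
  have xe2 : ∀ k, k + 2 < n → xe k ≠ xe (k + 2) := by
    intro k h
    rw [xe_eq k (by omega), xe_eq (k + 2) h]
    exact vtx_ne2 v k h
  by_cases hc : (xe 1).1 < d - 1 ∧ xe 0 = gsw d (xe 1)
  · -- v is itself an element of the dominating set
    have hne12 : xe 1 ≠ xe 2 := xe1 1 (by omega)
    have hpr : ∃ pr, pairAB d hd pr = (xe 1, xe 2) := by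
      by_cases h2 : (xe 2).1 < d - 1
      · have hgne : xe 1 ≠ gsw d (xe 2) := by
          intro q
          apply xe2 0 (by omega)
          rw [hc.2, q, gsw_invol hodd h2]
        have hbne : xe 2 ≠ gsw d (xe 2) := (gsw_ne h2).symm
        refine ⟨Sum.inl (⟨(xe 2).1, h2⟩, rank2 (xe 2) (gsw d (xe 2)) (xe 1) hbne hne12 hgne), ?_⟩
        have hb : (⟨(xe 2).1, by have := h2; omega⟩ : Fin d) = xe 2 := Fin.ext rfl
        rw [pairAB]
        rw [show (⟨(⟨(xe 2).1, h2⟩ : Fin (d-1)).1, by have := h2; omega⟩ : Fin d) = xe 2 from Fin.ext rfl]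
        rw [pick2_rank2]
      · have hbd : (⟨d - 1, by omega⟩ : Fin d) = xe 2 :=
          Fin.ext (by have := (xe 2).isLt; simp only [Fin.val_mk]; omega)
        refine ⟨Sum.inr (rank1 (xe 2) (xe 1) hne12), ?_⟩
        rw [pairAB, hbd, pick1_rank1]
    obtain ⟨pr, hpr⟩ := hpr
    refine ⟨fS d n hd hn (pr, fun k =>
      rank2 (xe (k.1 + 1)) (xe (k.1 + 2)) (xe (k.1 + 3))
        (xe1 (k.1 + 1) (by have := k.2; omega))
        ((xe2 (k.1 + 1) (by have := k.2; omega)).symm)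
        ((xe1 (k.1 + 2) (by have := k.2; omega)).symm)), ⟨_, rfl⟩, Or.inl ?_⟩
    set cfun : Fin (n - 3) → Fin (d - 2) := fun k =>
      rank2 (xe (k.1 + 1)) (xe (k.1 + 2)) (xe (k.1 + 3))
        (xe1 (k.1 + 1) (by have := k.2; omega))
        ((xe2 (k.1 + 1) (by have := k.2; omega)).symm)
        ((xe1 (k.1 + 2) (by have := k.2; omega)).symm) with hcfun
    have hdec : ∀ j, j < n - 1 →
        decode (xe 1, xe 2) (extc (show 0 < n - 3 by omega) cfun) j = xe (j + 1) := by
      apply decode_eq_of (x := fun j => xe (j + 1)) (m := n - 1)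
      · rfl
      · rfl
      · intro k hk
        rw [extc_lt _ cfun (show k < n - 3 by omega)]
        exact pick2_rank2 _ _ _ _ _ _
    have hhsel : hsel hd (xe 1) (xe 2) = xe 0 := by
      have hg2 : gsw d (xe 1) ≠ xe 2 := by
        rw [← hc.2]; exact xe2 0 (by omega)
      rw [hsel_spec hd hc.1 hg2, ← hc.2]
    apply Subtype.ext
    funext i
    show consSeq (hsel hd (pairAB d hd pr).1 (pairAB d hd pr).2)
        (decode (pairAB d hd pr) (extc (show 0 < n - 3 by omega) cfun)) i.1 = v.val i
    rw [hpr]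
    obtain ⟨iv, hiv⟩ := i
    cases iv with
    | zero =>
      show hsel hd (xe 1) (xe 2) = v.val ⟨0, hiv⟩
      rw [hhsel]
      exact xe_eq 0 hiv
    | succ k =>
      show decode (xe 1, xe 2) (extc (show 0 < n - 3 by omega) cfun) k = v.val ⟨k + 1, hiv⟩
      rw [hdec k (by omega)]
      exact xe_eq (k + 1) hiv
  · -- v is dominated by a predecessor in the set
    have hne01 : xe 0 ≠ xe 1 := xe1 0 (by omega)
    have hpr : ∃ pr, pairAB d hd pr = (xe 0, xe 1) := by
      by_cases h1 : (xe 1).1 < d - 1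
      · have hgne : xe 0 ≠ gsw d (xe 1) := fun q => hc ⟨h1, q⟩
        have hbne : xe 1 ≠ gsw d (xe 1) := (gsw_ne h1).symm
        refine ⟨Sum.inl (⟨(xe 1).1, h1⟩, rank2 (xe 1) (gsw d (xe 1)) (xe 0) hbne hne01 hgne), ?_⟩
        rw [pairAB]
        rw [show (⟨(⟨(xe 1).1, h1⟩ : Fin (d-1)).1, by have := h1; omega⟩ : Fin d) = xe 1 from
          Fin.ext rfl]
        rw [pick2_rank2]
      · have hbd : (⟨d - 1, by omega⟩ : Fin d) = xe 1 :=
          Fin.ext (by have := (xe 1).isLt; simp only [Fin.val_mk]; omega)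
        refine ⟨Sum.inr (rank1 (xe 1) (xe 0) hne01), ?_⟩
        rw [pairAB, hbd, pick1_rank1]
    obtain ⟨pr, hpr⟩ := hpr
    refine ⟨fS d n hd hn (pr, fun k =>
      rank2 (xe k.1) (xe (k.1 + 1)) (xe (k.1 + 2))
        (xe1 k.1 (by have := k.2; omega))
        ((xe2 k.1 (by have := k.2; omega)).symm)
        ((xe1 (k.1 + 1) (by have := k.2; omega)).symm)), ⟨_, rfl⟩, Or.inr ?_⟩
    set cfun : Fin (n - 3) → Fin (d - 2) := fun k =>
      rank2 (xe k.1) (xe (k.1 + 1)) (xe (k.1 + 2))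
        (xe1 k.1 (by have := k.2; omega))
        ((xe2 k.1 (by have := k.2; omega)).symm)
        ((xe1 (k.1 + 1) (by have := k.2; omega)).symm) with hcfun
    have hdec : ∀ j, j < n - 1 →
        decode (xe 0, xe 1) (extc (show 0 < n - 3 by omega) cfun) j = xe j := by
      apply decode_eq_of (x := fun j => xe j) (m := n - 1)
      · rfl
      · rfl
      · intro k hk
        rw [extc_lt _ cfun (show k < n - 3 by omega)]
        exact pick2_rank2 _ _ _ _ _ _
    intro i h
    show v.val i = consSeq (hsel hd (pairAB d hd pr).1 (pairAB d hd pr).2)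
        (decode (pairAB d hd pr) (extc (show 0 < n - 3 by omega) cfun)) (i.1 + 1)
    rw [hpr]
    show v.val i = decode (xe 0, xe 1) (extc (show 0 < n - 3 by omega) cfun) i.1
    rw [hdec i.1 (by omega)]
    exact (xe_eq i.1 (by omega)).symm

end DBaux
namespace DBaux
open Finset

lemma upper_aux (d n : ℕ) (hd : 3 ≤ d) (hn : 4 ≤ n) (hodd : d % 2 = 1) :
    gammaDir d 3 n ≤ (d - 1) ^ 2 * (d - 2) ^ (n - 3) := by
  have hdom := fS_dominating d n hd hn hodd
  have hfin : (Set.range (fS d n hd hn)).Finite := Set.finite_range _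
  have hle : (Set.range (fS d n hd hn)).ncard ≤ (d - 1) ^ 2 * (d - 2) ^ (n - 3) := by
    calc (Set.range (fS d n hd hn)).ncard
        = (fS d n hd hn '' Set.univ).ncard := by rw [Set.image_univ]
      _ ≤ (Set.univ : Set (((Fin (d - 1) × Fin (d - 2)) ⊕ Fin (d - 1)) ×
            (Fin (n - 3) → Fin (d - 2)))).ncard := Set.ncard_image_le Set.finite_univ
      _ = Fintype.card (((Fin (d - 1) × Fin (d - 2)) ⊕ Fin (d - 1)) ×
            (Fin (n - 3) → Fin (d - 2))) := by rw [Set.ncard_univ, Nat.card_eq_fintype_card]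
      _ = ((d - 1) * (d - 2) + (d - 1)) * (d - 2) ^ (n - 3) := by
          simp [Fintype.card_fun]
      _ = (d - 1) ^ 2 * (d - 2) ^ (n - 3) := by
          obtain ⟨e, rfl⟩ : ∃ e, d = e + 3 := ⟨d - 3, by omega⟩
          congr 1
          have h1 : e + 3 - 1 = e + 2 := by omega
          have h2 : e + 3 - 2 = e + 1 := by omega
          rw [h1, h2]
          ring
  exact le_trans (Nat.sInf_le ⟨_, hfin, rfl, hdom⟩) hle

end DBaux


/-- for `d` odd,
`d * (d-2)^(n-2) ≤ γ(cDB⁺(d,3,n)) ≤ (d-1)^2 * (d-2)^(n-3)`. -/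
theorem gammaDir_three_odd (d n : ℕ) (hd : 3 ≤ d) (hn : 4 ≤ n) (hodd : Odd d) :
    d * (d - 2) ^ (n - 2) ≤ gammaDir d 3 n ∧
    gammaDir d 3 n ≤ (d - 1) ^ 2 * (d - 2) ^ (n - 3) := by

  have hodd' : d % 2 = 1 := Nat.odd_iff.mp hodd
  constructor
  · have hne : {k | ∃ S : Set (dbVtx d 3 n), S.Finite ∧ S.ncard = k ∧ dbDirDominating S}.Nonempty :=
      ⟨_, Set.range (DBaux.fS d n hd hn), Set.finite_range _, rfl,
        DBaux.fS_dominating d n hd hn hodd'⟩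
    have hmem := Nat.sInf_mem hne
    obtain ⟨S, hfin, hcard, hdom⟩ := hmem
    rw [gammaDir, ← hcard]
    exact DBaux.lower_aux d n hd hn hfin hdom
  · exact DBaux.upper_aux d n hd hn hodd'
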